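/- Let Λ be a commutative Noetherian ring, 𝔞 and 𝔟 two ideals of Λ, and M a finitely generated Λ-module. Then the 𝔟-adic completion of the 𝔞-adic completion of M is naturally isomorphic to the (𝔞+𝔟)-adic completion of M: (M̂_𝔞)^∧_𝔟 ≅ M̂_{𝔞+𝔟} ≅ (M̂_𝔟)^∧_𝔞. -/

import Mathlib

suppress_compilation

open Submodule LinearMap

theorem AdicCompletion.transitionMap_mk {R : Type*} [CommRing R] {I : Ideal R} {M : Type*}
    [AddCommGroup M] [Module R M] {m n : ℕ} (hmn : m ≤ n) (x : M) :
    AdicCompletion.transitionMap I M hmn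
      (Submodule.Quotient.mk (p := (I ^ n • ⊤ : Submodule R M)) x) =
      Submodule.Quotient.mk (p := (I ^ m • ⊤ : Submodule R M)) x := rfl

namespace Bousfield10

variable {Λ : Type} [CommRing Λ] (𝔞 𝔟 : Ideal Λ)
variable (M : Type) [AddCommGroup M] [Module Λ M]

/-! ### The filtration `𝔞^n M + 𝔟^n M` and its inverse limit -/

/-- The filtration `𝔞^n M + 𝔟^n M`. -/
abbrev F (n : ℕ) : Submodule Λ M := (𝔞 ^ n • ⊤) ⊔ (𝔟 ^ n • ⊤)

lemma F_antitone {m n : ℕ} (h : m ≤ n) : F 𝔞 𝔟 M n ≤ F 𝔞 𝔟 M m :=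
  sup_le_sup (smul_mono_left (Ideal.pow_le_pow_right h))
    (smul_mono_left (Ideal.pow_le_pow_right h))

/-- Transition maps of the filtration `F`. -/
def piF {m n : ℕ} (h : m ≤ n) : (M ⧸ F 𝔞 𝔟 M n) →ₗ[Λ] M ⧸ F 𝔞 𝔟 M m :=
  liftQ _ (mkQ _) (by rw [ker_mkQ]; exact F_antitone 𝔞 𝔟 M h)

@[simp] lemma piF_mk {m n : ℕ} (h : m ≤ n) (x : M) :
    piF 𝔞 𝔟 M h (Submodule.Quotient.mk x) = Submodule.Quotient.mk x := rfl

/-- The inverse limit along `F`, as a submodule of the product. -/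
def limF : Submodule Λ (∀ n, M ⧸ F 𝔞 𝔟 M n) where
  carrier := { f | ∀ (m n : ℕ) (h : m ≤ n), piF 𝔞 𝔟 M h (f n) = f m }
  add_mem' := by
    intro f g hf hg m n h
    simp only [Pi.add_apply, map_add, hf m n h, hg m n h]
  zero_mem' := by
    intro m n h
    simp
  smul_mem' := by
    intro r f hf m n h
    simp only [Pi.smul_apply, map_smul, hf m n h]

lemma pow2_le (n : ℕ) : ((𝔞 ⊔ 𝔟) ^ (2 * n) • ⊤ : Submodule Λ M) ≤ F 𝔞 𝔟 M n := by
  have h1 : (𝔞 ⊔ 𝔟) ^ (2 * n) ≤ 𝔞 ^ n ⊔ 𝔟 ^ n := by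
    rw [two_mul]
    exact Ideal.sup_pow_add_le_pow_sup_pow
  calc ((𝔞 ⊔ 𝔟) ^ (2 * n) • ⊤ : Submodule Λ M) ≤ (𝔞 ^ n ⊔ 𝔟 ^ n) • ⊤ := smul_mono_left h1
    _ = F 𝔞 𝔟 M n := by rw [sup_smul]

lemma F_le_pow (n : ℕ) : F 𝔞 𝔟 M n ≤ ((𝔞 ⊔ 𝔟) ^ n • ⊤ : Submodule Λ M) :=
  sup_le (smul_mono_left (Ideal.pow_right_mono le_sup_left n))
    (smul_mono_left (Ideal.pow_right_mono le_sup_right n))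

/-- From the `2n`-th adic quotient to the `n`-th `F`-quotient. -/
def q2 (n : ℕ) : (M ⧸ ((𝔞 ⊔ 𝔟) ^ (2 * n) • ⊤ : Submodule Λ M)) →ₗ[Λ] M ⧸ F 𝔞 𝔟 M n :=
  liftQ _ (mkQ _) (by rw [ker_mkQ]; exact pow2_le 𝔞 𝔟 M n)

@[simp] lemma q2_mk (n : ℕ) (x : M) :
    q2 𝔞 𝔟 M n (Submodule.Quotient.mk x) = Submodule.Quotient.mk x := rfl

/-- From the `n`-th `F`-quotient to the `n`-th adic quotient. -/
def qF (n : ℕ) : (M ⧸ F 𝔞 𝔟 M n) →ₗ[Λ] M ⧸ ((𝔞 ⊔ 𝔟) ^ n • ⊤ : Submodule Λ M) :=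
  liftQ _ (mkQ _) (by rw [ker_mkQ]; exact F_le_pow 𝔞 𝔟 M n)

@[simp] lemma qF_mk (n : ℕ) (x : M) :
    qF 𝔞 𝔟 M n (Submodule.Quotient.mk x) = Submodule.Quotient.mk x := rfl

/-- The map from the `(𝔞 ⊔ 𝔟)`-adic completion to `limF`. -/
def toLimF : AdicCompletion (𝔞 ⊔ 𝔟) M →ₗ[Λ] limF 𝔞 𝔟 M where
  toFun x := ⟨fun n => q2 𝔞 𝔟 M n (x.val (2 * n)), by
    intro m n h
    obtain ⟨t, ht⟩ := Submodule.Quotient.mk_surjective _ (x.val (2 * n))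
    have hm : x.val (2 * m) = Submodule.Quotient.mk t := by
      rw [← x.property (show 2 * m ≤ 2 * n by omega), ← ht,
        AdicCompletion.transitionMap_mk]
    simp [← ht, hm]⟩
  map_add' x y := by
    apply Subtype.ext
    funext n
    simp [AdicCompletion.val_add]
  map_smul' r x := by
    apply Subtype.ext
    funext n
    simp [AdicCompletion.val_smul]

/-- The map from `limF` to the `(𝔞 ⊔ 𝔟)`-adic completion. -/
def fromLimF : limF 𝔞 𝔟 M →ₗ[Λ] AdicCompletion (𝔞 ⊔ 𝔟) M where
  toFun f := ⟨fun n => qF 𝔞 𝔟 M n (f.val n), by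
    intro m n h
    obtain ⟨t, ht⟩ := Submodule.Quotient.mk_surjective _ (f.val n)
    have hm : f.val m = Submodule.Quotient.mk t := by
      rw [← f.property m n h, ← ht, piF_mk]
    simp [← ht, hm]⟩
  map_add' x y := by
    apply AdicCompletion.ext
    intro n
    simp [AdicCompletion.val_add_apply]
    rfl
  map_smul' r x := by
    apply AdicCompletion.ext
    intro n
    show qF 𝔞 𝔟 M n ((r • x).val n) = r • qF 𝔞 𝔟 M n (x.val n)
    simp

/-- `AdicCompletion (𝔞 ⊔ 𝔟) M ≃ limF`. -/
def adicEquivLimF : AdicCompletion (𝔞 ⊔ 𝔟) M ≃ₗ[Λ] limF 𝔞 𝔟 M :=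
  LinearEquiv.ofLinear (toLimF 𝔞 𝔟 M) (fromLimF 𝔞 𝔟 M)
    (by
      refine LinearMap.ext fun f => ?_
      refine Subtype.ext (funext fun n => ?_)
      obtain ⟨t, ht⟩ := Submodule.Quotient.mk_surjective _ (f.val (2 * n))
      have hn : f.val n = Submodule.Quotient.mk t := by
        rw [← f.property n (2 * n) (by omega), ← ht, piF_mk]
      simp only [LinearMap.coe_comp, Function.comp_apply, LinearMap.id_coe, id_eq]
      show q2 𝔞 𝔟 M n ((fromLimF 𝔞 𝔟 M f).val (2 * n)) = f.val n
      show q2 𝔞 𝔟 M n (qF 𝔞 𝔟 M (2 * n) (f.val (2 * n))) = f.val n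
      rw [← ht, qF_mk, q2_mk, hn])
    (by
      refine LinearMap.ext fun x => ?_
      refine AdicCompletion.ext fun n => ?_
      obtain ⟨t, ht⟩ := Submodule.Quotient.mk_surjective _ (x.val (2 * n))
      have hn : x.val n = Submodule.Quotient.mk t := by
        rw [← x.property (show n ≤ 2 * n by omega), ← ht, AdicCompletion.transitionMap_mk]
      simp only [LinearMap.coe_comp, Function.comp_apply, LinearMap.id_coe, id_eq]
      show qF 𝔞 𝔟 M n ((toLimF 𝔞 𝔟 M x).val n) = x.val n
      show qF 𝔞 𝔟 M n (q2 𝔞 𝔟 M n (x.val (2 * n))) = x.val n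
      rw [← ht, q2_mk, qF_mk, hn])

/-! ### The canonical projection to completions of `M ⧸ 𝔟^n M` -/

/-- The canonical map from the `𝔞`-adic completion of `M` to that of `M ⧸ 𝔟^n M`,
as a `Λ`-linear map. -/
def qmap (n : ℕ) : AdicCompletion 𝔞 M →ₗ[Λ]
    AdicCompletion 𝔞 (M ⧸ (𝔟 ^ n • ⊤ : Submodule Λ M)) :=
  (AdicCompletion.map 𝔞 (mkQ (𝔟 ^ n • ⊤ : Submodule Λ M))).restrictScalars Λ

lemma qmap_surjective (n : ℕ) : Function.Surjective (qmap 𝔞 𝔟 M n) :=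
  AdicCompletion.map_surjective 𝔞 (mkQ_surjective _)

lemma smul_eq_zero_of_mem_pow (n : ℕ) {r : Λ} (hr : r ∈ 𝔟 ^ n)
    (w : AdicCompletion 𝔞 (M ⧸ (𝔟 ^ n • ⊤ : Submodule Λ M))) : r • w = 0 := by
  ext k
  rw [AdicCompletion.val_smul_apply, AdicCompletion.val_zero_apply]
  obtain ⟨u, hu⟩ := Submodule.Quotient.mk_surjective _ (w.val k)
  obtain ⟨m, hm⟩ := Submodule.Quotient.mk_surjective _ u
  have hru : r • u = 0 := by
    rw [← hm, ← Submodule.Quotient.mk_smul, Submodule.Quotient.mk_eq_zero]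
    exact smul_mem_smul hr mem_top
  rw [← hu, ← Submodule.Quotient.mk_smul, hru]
  simp

lemma qmap_eq_zero_of_mem (n : ℕ) {z : AdicCompletion 𝔞 M}
    (hz : z ∈ (𝔟 ^ n • ⊤ : Submodule Λ (AdicCompletion 𝔞 M))) : qmap 𝔞 𝔟 M n z = 0 := by
  refine Submodule.smul_induction_on hz (fun r hr x _ => ?_) (fun x y hx hy => ?_)
  · rw [map_smul]
    exact smul_eq_zero_of_mem_pow 𝔞 𝔟 M n hr _
  · rw [map_add, hx, hy, add_zero]

lemma qmap_congr (n : ℕ) {y y' : AdicCompletion 𝔞 M}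
    (h : (Submodule.Quotient.mk y :
      AdicCompletion 𝔞 M ⧸ (𝔟 ^ n • ⊤ : Submodule Λ (AdicCompletion 𝔞 M)))
      = Submodule.Quotient.mk y') :
    qmap 𝔞 𝔟 M n y = qmap 𝔞 𝔟 M n y' := by
  have h2 : qmap 𝔞 𝔟 M n (y - y') = 0 :=
    qmap_eq_zero_of_mem 𝔞 𝔟 M n (Submodule.Quotient.eq _ |>.mp h)
  rw [map_sub, sub_eq_zero] at h2
  exact h2

/-! ### Kernel of `qmap` (needs Noetherian hypotheses) -/

section Noetherian

variable [IsNoetherianRing Λ] [Module.Finite Λ M]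

lemma mem_of_qmap_eq_zero (n : ℕ) {z : AdicCompletion 𝔞 M}
    (hz : qmap 𝔞 𝔟 M n z = 0) :
    z ∈ (𝔟 ^ n • ⊤ : Submodule Λ (AdicCompletion 𝔞 M)) := by
  classical
  set K : Submodule Λ M := 𝔟 ^ n • ⊤ with hK
  have hexact := AdicCompletion.map_exact (I := 𝔞) (injective_subtype K)
    (exact_subtype_mkQ K) (mkQ_surjective K)
  obtain ⟨w, hw⟩ := (hexact z).mp hz
  obtain ⟨s, hs⟩ := IsNoetherian.noetherian (𝔟 ^ n)
  -- the multiplication map `(↥s → M) → M`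
  set h : (↥s → M) →ₗ[Λ] M := ∑ i : ↥s, (i : Λ) • LinearMap.proj i with hh
  have hhm : ∀ m : ↥s → M, h m = ∑ i : ↥s, (i : Λ) • m i := by
    intro m
    simp [hh]
  have hmem : ∀ i : ↥s, (i : Λ) ∈ 𝔟 ^ n := fun i => hs ▸ subset_span i.2
  have hrange : ∀ m : ↥s → M, h m ∈ K := by
    intro m
    rw [hhm]
    exact sum_mem fun i _ => smul_mem_smul (hmem i) mem_top
  set h' : (↥s → M) →ₗ[Λ] K := h.codRestrict K hrange with hh'
  have hKle : K ≤ LinearMap.range h := by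
    rw [hK]
    refine smul_le.mpr fun r hr m _ => ?_
    rw [← hs] at hr
    induction hr using Submodule.span_induction with
    | mem x hx =>
        refine ⟨Pi.single ⟨x, hx⟩ m, ?_⟩
        rw [hhm, Finset.sum_eq_single (⟨x, hx⟩ : ↥s)]
        · simp
        · intro j _ hj
          simp [Pi.single_apply, hj]
        · simp
    | zero => simpa using zero_mem _
    | add x y _ _ hx hy => rw [add_smul]; exact add_mem hx hy
    | smul c x _ hx => rw [smul_eq_mul, mul_smul]; exact Submodule.smul_mem _ c hx
  have hs' : Function.Surjective h' := by
    intro x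
    obtain ⟨m, hm⟩ := hKle x.2
    exact ⟨m, Subtype.ext (by simp [hh', hm])⟩
  obtain ⟨u, hu⟩ := AdicCompletion.map_surjective 𝔞 hs' w
  have hz' : z = AdicCompletion.map 𝔞 h u := by
    rw [← hw, ← hu, AdicCompletion.map_comp_apply, LinearMap.subtype_comp_codRestrict h K hrange]
  have hsum : AdicCompletion.map 𝔞 h u
      = ∑ i : ↥s, (i : Λ) • (AdicCompletion.map 𝔞 (LinearMap.proj i) u : AdicCompletion 𝔞 M) := by
    ext k
    obtain ⟨m, hm⟩ := Submodule.Quotient.mk_surjective _ (u.val k)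
    rw [AdicCompletion.val_sum_apply]
    have h1 : (AdicCompletion.map 𝔞 h u).val k
        = Submodule.Quotient.mk (h m) := by
      rw [AdicCompletion.map_val_apply, ← hm, LinearMap.reduceModIdeal_apply]
    rw [h1, hhm, ← mkQ_apply, map_sum]
    refine Finset.sum_congr rfl fun i _ => ?_
    rw [AdicCompletion.val_smul_apply, AdicCompletion.map_val_apply, ← hm,
      LinearMap.reduceModIdeal_apply, map_smul]
    rfl
  rw [hz', hsum]
  exact sum_mem fun i _ => smul_mem_smul (hmem i) mem_top

end Noetherian

/-! ### The comparison map `Φ` -/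

/-- Factor `M ⧸ 𝔞^n M` onto `M ⧸ F n`. -/
def factorA (n : ℕ) : (M ⧸ (𝔞 ^ n • ⊤ : Submodule Λ M)) →ₗ[Λ] M ⧸ F 𝔞 𝔟 M n :=
  liftQ _ (mkQ _) (by rw [ker_mkQ]; exact le_sup_left)

@[simp] lemma factorA_mk (n : ℕ) (t : M) :
    factorA 𝔞 𝔟 M n (Submodule.Quotient.mk t) = Submodule.Quotient.mk t := rfl

/-- Project the `𝔞`-adic completion onto `M ⧸ F n`. -/
def p (n : ℕ) : AdicCompletion 𝔞 M →ₗ[Λ] M ⧸ F 𝔞 𝔟 M n :=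
  factorA 𝔞 𝔟 M n ∘ₗ AdicCompletion.eval 𝔞 M n

lemma p_eq (n : ℕ) (y : AdicCompletion 𝔞 M) {t : M}
    (ht : y.val n = Submodule.Quotient.mk t) :
    p 𝔞 𝔟 M n y = Submodule.Quotient.mk t := by
  show factorA 𝔞 𝔟 M n (y.val n) = _
  rw [ht, factorA_mk]

lemma p_ker (n : ℕ) :
    (𝔟 ^ n • ⊤ : Submodule Λ (AdicCompletion 𝔞 M)) ≤ LinearMap.ker (p 𝔞 𝔟 M n) := by
  refine smul_le.mpr fun r hr y _ => ?_
  rw [LinearMap.mem_ker, map_smul]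
  obtain ⟨t, ht⟩ := Submodule.Quotient.mk_surjective _ (y.val n)
  rw [p_eq 𝔞 𝔟 M n y ht.symm, ← Submodule.Quotient.mk_smul, Submodule.Quotient.mk_eq_zero]
  exact Submodule.mem_sup_right (smul_mem_smul hr mem_top)

/-- `p` descends to the quotients mod `𝔟^n`. -/
def pbar (n : ℕ) :
    (AdicCompletion 𝔞 M ⧸ (𝔟 ^ n • ⊤ : Submodule Λ (AdicCompletion 𝔞 M)))
      →ₗ[Λ] M ⧸ F 𝔞 𝔟 M n :=
  liftQ _ (p 𝔞 𝔟 M n) (p_ker 𝔞 𝔟 M n)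

@[simp] lemma pbar_mk (n : ℕ) (y : AdicCompletion 𝔞 M) :
    pbar 𝔞 𝔟 M n (Submodule.Quotient.mk y) = p 𝔞 𝔟 M n y := rfl

/-- The comparison map from the double completion to `limF`. -/
def Phi : AdicCompletion 𝔟 (AdicCompletion 𝔞 M) →ₗ[Λ] limF 𝔞 𝔟 M where
  toFun x := ⟨fun n => pbar 𝔞 𝔟 M n (x.val n), by
    intro m n h
    obtain ⟨y, hy⟩ := Submodule.Quotient.mk_surjective _ (x.val n)
    obtain ⟨t, ht⟩ := Submodule.Quotient.mk_surjective _ (y.val n)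
    have hm : x.val m = Submodule.Quotient.mk y := by
      rw [← x.property h, ← hy, AdicCompletion.transitionMap_mk]
    have htm : y.val m = Submodule.Quotient.mk t := by
      rw [← y.property h, ← ht, AdicCompletion.transitionMap_mk]
    show piF 𝔞 𝔟 M h (pbar 𝔞 𝔟 M n (x.val n)) = pbar 𝔞 𝔟 M m (x.val m)
    rw [← hy, hm, pbar_mk, pbar_mk, p_eq 𝔞 𝔟 M n y ht.symm, p_eq 𝔞 𝔟 M m y htm, piF_mk]⟩
  map_add' x y := by
    apply Subtype.ext
    funext n
    show pbar 𝔞 𝔟 M n ((x + y).val n) = pbar 𝔞 𝔟 M n (x.val n) + pbar 𝔞 𝔟 M n (y.val n)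
    rw [AdicCompletion.val_add_apply, map_add]
  map_smul' r x := by
    apply Subtype.ext
    funext n
    show pbar 𝔞 𝔟 M n ((r • x).val n) = r • pbar 𝔞 𝔟 M n (x.val n)
    rw [AdicCompletion.val_smul_apply, map_smul]

lemma Phi_val (x : AdicCompletion 𝔟 (AdicCompletion 𝔞 M)) (n : ℕ) :
    (Phi 𝔞 𝔟 M x).val n = pbar 𝔞 𝔟 M n (x.val n) := rfl

/-! ### Double quotients -/

/-- The double quotient map `M → (M ⧸ 𝔟^n M) ⧸ 𝔞^k (M ⧸ 𝔟^n M)`. -/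
def dq (n k : ℕ) : M →ₗ[Λ]
    (M ⧸ (𝔟 ^ n • ⊤ : Submodule Λ M))
      ⧸ (𝔞 ^ k • ⊤ : Submodule Λ (M ⧸ (𝔟 ^ n • ⊤ : Submodule Λ M))) :=
  mkQ _ ∘ₗ mkQ _

@[simp] lemma dq_apply (n k : ℕ) (t : M) :
    dq 𝔞 𝔟 M n k t = Submodule.Quotient.mk (Submodule.Quotient.mk t) := rfl

lemma smul_top_quotient (n k : ℕ) :
    (𝔞 ^ k • ⊤ : Submodule Λ (M ⧸ (𝔟 ^ n • ⊤ : Submodule Λ M)))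
      = map (mkQ (𝔟 ^ n • ⊤ : Submodule Λ M)) (𝔞 ^ k • ⊤ : Submodule Λ M) := by
  rw [map_smul'', Submodule.map_top, range_mkQ]

lemma dq_eq_zero {n k : ℕ} {t : M}
    (ht : t ∈ (𝔞 ^ k • ⊤ : Submodule Λ M) ⊔ (𝔟 ^ n • ⊤ : Submodule Λ M)) :
    dq 𝔞 𝔟 M n k t = 0 := by
  obtain ⟨a, ha, b, hb, rfl⟩ := mem_sup.mp ht
  show Submodule.Quotient.mk (Submodule.Quotient.mk (a + b)) = 0
  have h1 : (Submodule.Quotient.mk (a + b) : M ⧸ (𝔟 ^ n • ⊤ : Submodule Λ M))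
      = Submodule.Quotient.mk a := by
    rw [Submodule.Quotient.eq]
    simpa using hb
  rw [h1, Submodule.Quotient.mk_eq_zero, smul_top_quotient]
  exact mem_map_of_mem ha

lemma mem_of_dq_eq_zero {n k : ℕ} {t : M} (ht : dq 𝔞 𝔟 M n k t = 0) :
    t ∈ (𝔞 ^ k • ⊤ : Submodule Λ M) ⊔ (𝔟 ^ n • ⊤ : Submodule Λ M) := by
  have h1 : (Submodule.Quotient.mk t : M ⧸ (𝔟 ^ n • ⊤ : Submodule Λ M))
      ∈ (𝔞 ^ k • ⊤ : Submodule Λ (M ⧸ (𝔟 ^ n • ⊤ : Submodule Λ M))) := by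
    rw [← Submodule.Quotient.mk_eq_zero]
    exact ht
  rw [smul_top_quotient] at h1
  obtain ⟨a, ha, hat⟩ := h1
  have h2 : t - a ∈ (𝔟 ^ n • ⊤ : Submodule Λ M) := by
    rw [← Submodule.Quotient.eq]
    exact hat.symm
  have h3 : t = a + (t - a) := by abel
  rw [h3]
  exact add_mem (Submodule.mem_sup_left ha) (Submodule.mem_sup_right h2)

lemma qmap_val (n k : ℕ) (y : AdicCompletion 𝔞 M) {t : M}
    (ht : y.val k = Submodule.Quotient.mk t) :
    (qmap 𝔞 𝔟 M n y).val k = dq 𝔞 𝔟 M n k t := by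
  show (AdicCompletion.map 𝔞 (mkQ (𝔟 ^ n • ⊤ : Submodule Λ M)) y).val k = _
  rw [AdicCompletion.map_val_apply, ht]
  rfl

lemma F_le_mix (n k : ℕ) :
    F 𝔞 𝔟 M (max n k) ≤ (𝔞 ^ k • ⊤ : Submodule Λ M) ⊔ (𝔟 ^ n • ⊤ : Submodule Λ M) :=
  sup_le_sup (smul_mono_left (Ideal.pow_le_pow_right (le_max_right n k)))
    (smul_mono_left (Ideal.pow_le_pow_right (le_max_left n k)))

/-! ### Injectivity of `Φ` -/

section Noetherian2

variable [IsNoetherianRing Λ] [Module.Finite Λ M]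

lemma Phi_eq_zero_imp {x : AdicCompletion 𝔟 (AdicCompletion 𝔞 M)}
    (hx : Phi 𝔞 𝔟 M x = 0) : x = 0 := by
  refine AdicCompletion.ext fun n => ?_
  obtain ⟨y, hy⟩ := Submodule.Quotient.mk_surjective _ (x.val n)
  rw [AdicCompletion.val_zero_apply, ← hy, Submodule.Quotient.mk_eq_zero]
  apply mem_of_qmap_eq_zero 𝔞 𝔟 M n
  ext k
  rw [AdicCompletion.val_zero_apply]
  obtain ⟨Y, hY⟩ := Submodule.Quotient.mk_surjective _ (x.val (max n k))
  obtain ⟨t, ht⟩ := Submodule.Quotient.mk_surjective _ (Y.val (max n k))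
  have hxn : x.val n = Submodule.Quotient.mk Y := by
    rw [← x.property (le_max_left n k), ← hY, AdicCompletion.transitionMap_mk]
  have hyY : qmap 𝔞 𝔟 M n y = qmap 𝔞 𝔟 M n Y := qmap_congr 𝔞 𝔟 M n (by rw [hy, hxn])
  have hPhij : pbar 𝔞 𝔟 M (max n k) (x.val (max n k)) = 0 := by
    have h0 := congrFun (congrArg Subtype.val hx) (max n k)
    have h1 : ((0 : limF 𝔞 𝔟 M) : ∀ j, M ⧸ F 𝔞 𝔟 M j) (max n k) = 0 := rfl
    rw [h1] at h0
    rw [← Phi_val 𝔞 𝔟 M x (max n k)]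
    exact h0
  rw [← hY, pbar_mk, p_eq 𝔞 𝔟 M (max n k) Y ht.symm, Submodule.Quotient.mk_eq_zero] at hPhij
  have hYk : Y.val k = Submodule.Quotient.mk t := by
    rw [← Y.property (le_max_right n k), ← ht, AdicCompletion.transitionMap_mk]
  rw [hyY, qmap_val 𝔞 𝔟 M n k Y hYk]
  exact dq_eq_zero 𝔞 𝔟 M (F_le_mix 𝔞 𝔟 M n k hPhij)

lemma Phi_injective : Function.Injective (Phi 𝔞 𝔟 M) := by
  intro x y hxy
  have h := Phi_eq_zero_imp 𝔞 𝔟 M (x := x - y) (by rw [map_sub, hxy, sub_self])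
  rwa [sub_eq_zero] at h

end Noetherian2

/-! ### Surjectivity of `Φ` -/

/-- A compatible system in the completion of `M ⧸ 𝔟^n M` built from an element of `limF`. -/
def cseq (g : limF 𝔞 𝔟 M) (n : ℕ) : AdicCompletion 𝔞 (M ⧸ (𝔟 ^ n • ⊤ : Submodule Λ M)) :=
  ⟨fun k => liftQ (F 𝔞 𝔟 M (max n k)) (dq 𝔞 𝔟 M n k)
      (fun t htF => dq_eq_zero 𝔞 𝔟 M (F_le_mix 𝔞 𝔟 M n k htF)) (g.val (max n k)), by
    intro k k' h
    obtain ⟨t, ht⟩ := Submodule.Quotient.mk_surjective _ (g.val (max n k'))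
    have h2 : g.val (max n k) = Submodule.Quotient.mk t := by
      rw [← g.property (max n k) (max n k') (max_le_max le_rfl h), ← ht, piF_mk]
    beta_reduce
    rw [← ht, h2]
    rfl⟩

lemma cseq_val (g : limF 𝔞 𝔟 M) (n k : ℕ) {t : M}
    (ht : g.val (max n k) = Submodule.Quotient.mk t) :
    (cseq 𝔞 𝔟 M g n).val k = dq 𝔞 𝔟 M n k t := by
  show liftQ _ _ _ (g.val (max n k)) = _
  rw [ht]
  rfl

/-- Reduction map between completions of quotients. -/
def rmap {m n : ℕ} (h : m ≤ n) :
    AdicCompletion 𝔞 (M ⧸ (𝔟 ^ n • ⊤ : Submodule Λ M))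
      →ₗ[Λ] AdicCompletion 𝔞 (M ⧸ (𝔟 ^ m • ⊤ : Submodule Λ M)) :=
  (AdicCompletion.map 𝔞 (mapQ _ _ LinearMap.id
    (by rw [comap_id]; exact smul_mono_left (Ideal.pow_le_pow_right h)))).restrictScalars Λ

lemma rmap_qmap {m n : ℕ} (h : m ≤ n) (z : AdicCompletion 𝔞 M) :
    rmap 𝔞 𝔟 M h (qmap 𝔞 𝔟 M n z) = qmap 𝔞 𝔟 M m z := by
  have hcomp : (mapQ (𝔟 ^ n • ⊤ : Submodule Λ M) (𝔟 ^ m • ⊤ : Submodule Λ M) LinearMap.id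
      (by rw [comap_id]; exact smul_mono_left (Ideal.pow_le_pow_right h)))
        ∘ₗ mkQ (𝔟 ^ n • ⊤ : Submodule Λ M) = mkQ (𝔟 ^ m • ⊤ : Submodule Λ M) := by
    refine LinearMap.ext fun t => ?_
    simp [mapQ_apply]
  show AdicCompletion.map 𝔞 _ (AdicCompletion.map 𝔞 _ z) = AdicCompletion.map 𝔞 _ z
  rw [AdicCompletion.map_comp_apply, hcomp]

lemma rmap_cseq (g : limF 𝔞 𝔟 M) {m n : ℕ} (h : m ≤ n) :
    rmap 𝔞 𝔟 M h (cseq 𝔞 𝔟 M g n) = cseq 𝔞 𝔟 M g m := by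
  ext k
  obtain ⟨t, ht⟩ := Submodule.Quotient.mk_surjective _ (g.val (max n k))
  have h2 : g.val (max m k) = Submodule.Quotient.mk t := by
    rw [← g.property (max m k) (max n k) (max_le_max h le_rfl), ← ht, piF_mk]
  show (AdicCompletion.map 𝔞 _ (cseq 𝔞 𝔟 M g n)).val k = (cseq 𝔞 𝔟 M g m).val k
  rw [AdicCompletion.map_val_apply, cseq_val 𝔞 𝔟 M g n k ht.symm, cseq_val 𝔞 𝔟 M g m k h2]
  rfl

section Noetherian3

variable [IsNoetherianRing Λ] [Module.Finite Λ M]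

lemma Phi_surjective : Function.Surjective (Phi 𝔞 𝔟 M) := by
  intro g
  choose y hy using fun n => qmap_surjective 𝔞 𝔟 M n (cseq 𝔞 𝔟 M g n)
  have hcomp : ∀ (m n : ℕ) (h : m ≤ n),
      AdicCompletion.transitionMap 𝔟 (AdicCompletion 𝔞 M) h
        (Submodule.Quotient.mk (y n)) = Submodule.Quotient.mk (y m) := by
    intro m n h
    rw [AdicCompletion.transitionMap_mk, Submodule.Quotient.eq]
    apply mem_of_qmap_eq_zero 𝔞 𝔟 M m
    have h1 : qmap 𝔞 𝔟 M m (y n) = cseq 𝔞 𝔟 M g m := by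
      rw [← rmap_qmap 𝔞 𝔟 M h, hy n, rmap_cseq]
    rw [map_sub, h1, hy m, sub_self]
  refine ⟨⟨fun n => Submodule.Quotient.mk (y n), fun {m n} h => hcomp m n h⟩, ?_⟩
  apply Subtype.ext
  funext n
  show pbar 𝔞 𝔟 M n (Submodule.Quotient.mk (y n)) = g.val n
  rw [pbar_mk]
  obtain ⟨t, ht⟩ := Submodule.Quotient.mk_surjective _ ((y n).val n)
  obtain ⟨t', ht'⟩ := Submodule.Quotient.mk_surjective _ (g.val (max n n))
  have hgn : g.val n = Submodule.Quotient.mk t' := by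
    rw [← g.property n (max n n) (le_max_left n n), ← ht', piF_mk]
  rw [p_eq 𝔞 𝔟 M n (y n) ht.symm, hgn, Submodule.Quotient.eq]
  have h1 : (qmap 𝔞 𝔟 M n (y n)).val n = dq 𝔞 𝔟 M n n t :=
    qmap_val 𝔞 𝔟 M n n (y n) ht.symm
  have h2 : (cseq 𝔞 𝔟 M g n).val n = dq 𝔞 𝔟 M n n t' :=
    cseq_val 𝔞 𝔟 M g n n ht'.symm
  have h3 : dq 𝔞 𝔟 M n n t = dq 𝔞 𝔟 M n n t' := by
    rw [← h1, ← h2, hy n]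
  have h4 : dq 𝔞 𝔟 M n n (t - t') = 0 := by
    rw [map_sub, h3, sub_self]
  exact mem_of_dq_eq_zero 𝔞 𝔟 M h4

/-- The main equivalence. -/
def mainEquiv :
    AdicCompletion 𝔟 (AdicCompletion 𝔞 M) ≃ₗ[Λ] AdicCompletion (𝔞 ⊔ 𝔟) M :=
  (LinearEquiv.ofBijective (Phi 𝔞 𝔟 M)
    ⟨Phi_injective 𝔞 𝔟 M, Phi_surjective 𝔞 𝔟 M⟩).trans (adicEquivLimF 𝔞 𝔟 M).symm

end Noetherian3

end Bousfield10

/-- For a commutative Noetherian ring `Λ`, ideals `𝔞 𝔟`, and a finitely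
generated `Λ`-module `M`, the `𝔟`-adic completion of the `𝔞`-adic completion of `M` is
isomorphic to the `(𝔞+𝔟)`-adic completion, which is isomorphic to the `𝔞`-adic completion
of the `𝔟`-adic completion. -/
theorem bousfield_stmt10 (Λ : Type) [CommRing Λ] [IsNoetherianRing Λ]
    (𝔞 𝔟 : Ideal Λ) (M : Type) [AddCommGroup M] [Module Λ M] [Module.Finite Λ M] :
    Nonempty (AdicCompletion 𝔟 (AdicCompletion 𝔞 M) ≃ₗ[Λ] AdicCompletion (𝔞 ⊔ 𝔟) M) ∧
    Nonempty (AdicCompletion (𝔞 ⊔ 𝔟) M ≃ₗ[Λ] AdicCompletion 𝔞 (AdicCompletion 𝔟 M)) := by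
  constructor
  · exact ⟨Bousfield10.mainEquiv 𝔞 𝔟 M⟩
  · rw [sup_comm]
    exact ⟨(Bousfield10.mainEquiv 𝔟 𝔞 M).symm⟩
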